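/- The modular curve X₀(N) has genus at most two if and only if N ≤ 29 or N ∈ {31, 32, 36, 37, 49, 50}. -/

import Mathlib

open Finset

/-- Index `μ(N) = N·∏_{p∣N}(1 + 1/p)` of `Γ₀(N)` in `PSL₂(ℤ)`. -/
noncomputable def gamma0Index (N : ℕ) : ℚ :=
  (N : ℚ) * ∏ p ∈ N.primeFactors, (1 + 1 / (p : ℚ))

/-- The symbol `(−1/p)`. -/
def chiFour (p : ℕ) : ℚ :=
  if p % 4 = 1 then 1 else if p % 4 = 3 then -1 else 0

/-- The symbol `(−3/p)`. -/
def chiThree (p : ℕ) : ℚ :=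
  if p % 3 = 1 then 1 else if p % 3 = 2 then -1 else 0

/-- Number `ν₂(N)` of elliptic points of order 2 on `X₀(N)`. -/
noncomputable def nuTwo (N : ℕ) : ℚ :=
  if 4 ∣ N then 0 else ∏ p ∈ N.primeFactors, (1 + chiFour p)

/-- Number `ν₃(N)` of elliptic points of order 3 on `X₀(N)`. -/
noncomputable def nuThree (N : ℕ) : ℚ :=
  if 9 ∣ N then 0 else ∏ p ∈ N.primeFactors, (1 + chiThree p)

/-- Number `ν_∞(N)` of cusps of `X₀(N)`. -/
noncomputable def nuInf (N : ℕ) : ℚ :=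
  ∑ d ∈ N.divisors, (Nat.totient (Nat.gcd d (N / d)) : ℚ)

/-- Genus of the modular curve `X₀(N)`. -/
noncomputable def genusX0 (N : ℕ) : ℚ :=
  1 + gamma0Index N / 12 - nuTwo N / 4 - nuThree N / 3 - nuInf N / 2

/-! ### Computable ℕ-valued versions -/

def isPrB (p : ℕ) : Bool := 2 ≤ p && (List.range p).all fun m => !(2 ≤ m) || !(p % m == 0)

lemma isPrB_iff {p : ℕ} : isPrB p = true ↔ p.Prime := by
  rw [Nat.prime_def_lt']
  simp only [isPrB, Bool.and_eq_true, decide_eq_true_eq, List.all_eq_true, List.mem_range,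
    Bool.or_eq_true, Bool.not_eq_true', beq_eq_false_iff_ne, ne_eq, decide_eq_false_iff_not,
    not_le]
  constructor
  · rintro ⟨h2, h⟩
    refine ⟨h2, fun m hm hmp hdvd => ?_⟩
    rcases h m hmp with h' | h'
    · omega
    · exact h' (Nat.dvd_iff_mod_eq_zero.mp hdvd)
  · rintro ⟨h2, h⟩
    refine ⟨h2, fun m hmp => ?_⟩
    by_cases hm : 2 ≤ m
    · right
      intro hmod
      exact h m hm hmp ((Nat.dvd_iff_mod_eq_zero.mpr hmod))
    · left; omega

def pfc (N : ℕ) : Finset ℕ := N.divisors.filter fun p => isPrB p = true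

lemma pfc_eq (N : ℕ) : pfc N = N.primeFactors := by
  ext p
  simp only [pfc, Finset.mem_filter, Nat.mem_divisors, Nat.mem_primeFactors, isPrB_iff]
  tauto

def c4 (p : ℕ) : ℕ := if p % 4 = 1 then 2 else if p % 4 = 3 then 0 else 1
def c3 (p : ℕ) : ℕ := if p % 3 = 1 then 2 else if p % 3 = 2 then 0 else 1
def a2 (N : ℕ) : ℕ := if 4 ∣ N then 0 else ∏ p ∈ pfc N, c4 p
def a3 (N : ℕ) : ℕ := if 9 ∣ N then 0 else ∏ p ∈ pfc N, c3 p
def vI (N : ℕ) : ℕ := ∑ d ∈ N.divisors, (Nat.gcd d (N/d)).totient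
def PP (N : ℕ) : ℕ := ∏ p ∈ pfc N, p
def QQ (N : ℕ) : ℕ := ∏ p ∈ pfc N, (p+1)

def ok (N : ℕ) : Prop := N * QQ N ≤ PP N * (12 + 3 * a2 N + 4 * a3 N + 6 * vI N)

instance : DecidablePred ok := fun N => by unfold ok; infer_instance

/-! ### Cast lemmas -/

lemma nuTwo_eq (N : ℕ) : nuTwo N = (a2 N : ℚ) := by
  rw [nuTwo, a2, pfc_eq]
  split
  · simp
  · push_cast
    refine Finset.prod_congr rfl fun p _ => ?_
    simp only [chiFour, c4]
    split_ifs <;> norm_num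

lemma nuThree_eq (N : ℕ) : nuThree N = (a3 N : ℚ) := by
  rw [nuThree, a3, pfc_eq]
  split
  · simp
  · push_cast
    refine Finset.prod_congr rfl fun p _ => ?_
    simp only [chiThree, c3]
    split_ifs <;> norm_num

lemma nuInf_eq (N : ℕ) : nuInf N = (vI N : ℚ) := by
  rw [nuInf, vI]; push_cast; rfl

lemma PP_pos (N : ℕ) : 0 < PP N := by
  rw [PP, pfc_eq]
  exact Finset.prod_pos fun p hp => (Nat.prime_of_mem_primeFactors hp).pos

lemma gamma0_eq (N : ℕ) : gamma0Index N * (PP N : ℚ) = (N : ℚ) * QQ N := by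
  rw [gamma0Index, PP, QQ, pfc_eq]
  push_cast
  rw [mul_assoc, ← Finset.prod_mul_distrib]
  congr 1
  refine Finset.prod_congr rfl fun p hp => ?_
  have hp0 : (p : ℚ) ≠ 0 := by
    exact_mod_cast (Nat.prime_of_mem_primeFactors hp).ne_zero
  field_simp

lemma genus_le_iff (N : ℕ) : genusX0 N ≤ 2 ↔ ok N := by
  have hP : (0:ℚ) < PP N := by exact_mod_cast PP_pos N
  have hok : ok N ↔ (N : ℚ) * QQ N ≤ (PP N : ℚ) * (12 + 3 * a2 N + 4 * a3 N + 6 * vI N) := by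
    rw [ok]
    constructor
    · intro h; exact_mod_cast h
    · intro h; exact_mod_cast h
  rw [hok, genusX0, nuTwo_eq, nuThree_eq, nuInf_eq, ← gamma0_eq]
  constructor
  · intro h
    have h2 : gamma0Index N ≤ 12 + 3 * a2 N + 4 * a3 N + 6 * vI N := by linarith
    nlinarith [mul_le_mul_of_nonneg_right h2 hP.le]
  · intro h
    have h2 : gamma0Index N ≤ 12 + 3 * a2 N + 4 * a3 N + 6 * vI N := by
      refine le_of_mul_le_mul_right ?_ hP
      nlinarith
    linarith

lemma vI_one : vI 1 = 1 := by simp [vI]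

lemma vI_mul {m n : ℕ} (hm : m ≠ 0) (hn : n ≠ 0) (h : m.Coprime n) :
    vI (m * n) = vI m * vI n := by
  rw [vI, vI, vI, Finset.sum_mul_sum, ← Finset.sum_product']
  refine Finset.sum_nbij' (i := fun d => (Nat.gcd d m, Nat.gcd d n))
    (j := fun x => x.1 * x.2) ?_ ?_ ?_ ?_ ?_
  · intro d hd
    rw [Nat.mem_divisors] at hd
    simp only [Finset.mem_product, Nat.mem_divisors]
    exact ⟨⟨Nat.gcd_dvd_right _ _, hm⟩, ⟨Nat.gcd_dvd_right _ _, hn⟩⟩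
  · intro x hx
    simp only [Finset.mem_product, Nat.mem_divisors] at hx
    exact Nat.mem_divisors.mpr ⟨mul_dvd_mul hx.1.1 hx.2.1, mul_ne_zero hm hn⟩
  · intro d hd
    rw [Nat.mem_divisors] at hd
    exact (Nat.gcd_mul_gcd_eq_iff_dvd_mul_of_coprime h).mpr hd.1
  · intro x hx
    simp only [Finset.mem_product, Nat.mem_divisors] at hx
    obtain ⟨⟨ha, -⟩, ⟨hb, -⟩⟩ := hx
    have hab : Nat.Coprime x.1 x.2 :=
      Nat.Coprime.coprime_dvd_right hb (Nat.Coprime.coprime_dvd_left ha h)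
    have h1 : Nat.gcd (x.1 * x.2) m = x.1 := by
      have e1 : Nat.gcd m x.1 = x.1 := by
        rw [Nat.gcd_comm]; exact Nat.gcd_eq_left ha
      have e2 : Nat.gcd m x.2 = 1 :=
        Nat.Coprime.gcd_eq_one (Nat.Coprime.coprime_dvd_right hb h)
      rw [Nat.gcd_comm (x.1 * x.2) m, hab.gcd_mul m, e1, e2, mul_one]
    have h2 : Nat.gcd (x.1 * x.2) n = x.2 := by
      have e1 : Nat.gcd n x.1 = 1 :=
        Nat.Coprime.gcd_eq_one (Nat.Coprime.coprime_dvd_right ha h.symm)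
      have e2 : Nat.gcd n x.2 = x.2 := by
        rw [Nat.gcd_comm]; exact Nat.gcd_eq_left hb
      rw [Nat.gcd_comm (x.1 * x.2) n, hab.gcd_mul n, e1, e2, one_mul]
    exact Prod.ext h1 h2
  · intro d hd
    rw [Nat.mem_divisors] at hd
    set a := Nat.gcd d m with hadef
    set b := Nat.gcd d n with hbdef
    have ha : a ∣ m := Nat.gcd_dvd_right _ _
    have hb : b ∣ n := Nat.gcd_dvd_right _ _
    have hd' : a * b = d := (Nat.gcd_mul_gcd_eq_iff_dvd_mul_of_coprime h).mpr hd.1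
    have hab : Nat.Coprime a b :=
      Nat.Coprime.coprime_dvd_right hb (Nat.Coprime.coprime_dvd_left ha h)
    have ha' : m / a ∣ m := Nat.div_dvd_of_dvd ha
    have hb' : n / b ∣ n := Nat.div_dvd_of_dvd hb
    have ha'b' : Nat.Coprime (m / a) (n / b) :=
      Nat.Coprime.coprime_dvd_right hb' (Nat.Coprime.coprime_dvd_left ha' h)
    have hdiv : m * n / (a * b) = (m / a) * (n / b) :=
      (Nat.div_mul_div_comm ha hb).symm
    have hg1 : Nat.gcd (a * b) (m / a) = Nat.gcd a (m / a) := by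
      have e2 : Nat.gcd (m / a) b = 1 :=
        Nat.Coprime.gcd_eq_one
          (Nat.Coprime.coprime_dvd_right hb (Nat.Coprime.coprime_dvd_left ha' h))
      rw [Nat.gcd_comm (a * b) (m / a), hab.gcd_mul (m / a), e2, mul_one,
        Nat.gcd_comm (m / a) a]
    have hg2 : Nat.gcd (a * b) (n / b) = Nat.gcd b (n / b) := by
      have e1 : Nat.gcd (n / b) a = 1 :=
        Nat.Coprime.gcd_eq_one
          (Nat.Coprime.coprime_dvd_right ha (Nat.Coprime.coprime_dvd_left hb' h.symm))
      rw [Nat.gcd_comm (a * b) (n / b), hab.gcd_mul (n / b), e1, one_mul,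
        Nat.gcd_comm (n / b) b]
    have hsplit : Nat.gcd d (m * n / d) = Nat.gcd a (m / a) * Nat.gcd b (n / b) := by
      rw [← hd', hdiv, ha'b'.gcd_mul (a * b), hg1, hg2]
    rw [hsplit]
    refine Nat.totient_mul ?_
    exact Nat.Coprime.coprime_dvd_right ((Nat.gcd_dvd_left _ _).trans hb)
      (Nat.Coprime.coprime_dvd_left ((Nat.gcd_dvd_left _ _).trans ha) h)

lemma gcd_pow_pow (p i j : ℕ) : Nat.gcd (p ^ i) (p ^ j) = p ^ min i j := by
  rcases le_total i j with hij | hij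
  · rw [Nat.gcd_eq_left (pow_dvd_pow p hij), min_eq_left hij]
  · rw [Nat.gcd_eq_right (pow_dvd_pow p hij), min_eq_right hij]

lemma sum_phi_range {p : ℕ} (hp : p.Prime) (k : ℕ) :
    ∑ i ∈ Finset.range (k + 1), Nat.totient (p ^ i) = p ^ k := by
  rw [← Nat.sum_divisors_prime_pow hp]
  exact Nat.sum_totient _

lemma vI_prime_pow {p : ℕ} (hp : p.Prime) (e : ℕ) :
    (vI (p ^ e)) ^ 2 * p ^ 2 ≤ p ^ e * (p + 1) ^ 2 := by
  have hS : vI (p ^ e) = ∑ i ∈ Finset.range (e + 1), Nat.totient (p ^ min i (e - i)) := by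
    rw [vI, Nat.sum_divisors_prime_pow hp]
    refine Finset.sum_congr rfl fun i hi => ?_
    rw [Finset.mem_range] at hi
    rw [Nat.pow_div (by omega) hp.pos, gcd_pow_pow]
  have hp2 : 2 ≤ p := hp.two_le
  have split_sum : ∀ a b : ℕ, a ≤ b →
      ∑ i ∈ Finset.range (b + 1), Nat.totient (p ^ min i (b - i)) =
        (∑ i ∈ Finset.Ico 0 (a + 1), Nat.totient (p ^ min i (b - i))) +
          ∑ i ∈ Finset.Ico (a + 1) (b + 1), Nat.totient (p ^ min i (b - i)) := by
    intro a b hab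
    rw [Finset.range_eq_Ico, Finset.sum_Ico_consecutive _ (by omega) (by omega)]
  rcases Nat.even_or_odd e with ⟨k, hk⟩ | ⟨k, hk⟩
  · -- e = k + k
    subst hk
    rcases Nat.eq_zero_or_pos k with rfl | hkpos
    · simp [vI]
      nlinarith
    have hval : vI (p ^ (k + k)) = p ^ k + p ^ (k - 1) := by
      rw [hS, split_sum k (k + k) (by omega)]
      have e1 : ∑ i ∈ Finset.Ico 0 (k + 1), Nat.totient (p ^ min i (k + k - i)) = p ^ k := by
        rw [← Finset.range_eq_Ico]
        have hc : ∀ i ∈ Finset.range (k + 1),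
            Nat.totient (p ^ min i (k + k - i)) = Nat.totient (p ^ i) := by
          intro i hi
          simp only [Finset.mem_range] at hi
          have hmin : min i (k + k - i) = i := by omega
          rw [hmin]
        rw [Finset.sum_congr rfl hc]
        exact sum_phi_range hp k
      have e2 : ∑ i ∈ Finset.Ico (k + 1) (k + k + 1), Nat.totient (p ^ min i (k + k - i)) =
          p ^ (k - 1) := by
        have hc : ∀ i ∈ Finset.Ico (k + 1) (k + k + 1),
            Nat.totient (p ^ min i (k + k - i)) = Nat.totient (p ^ (k + k - i)) := by
          intro i hi
          simp only [Finset.mem_Ico] at hi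
          have hmin : min i (k + k - i) = k + k - i := by omega
          rw [hmin]
        rw [Finset.sum_congr rfl hc]
        rw [Finset.sum_Ico_reflect (fun j => Nat.totient (p ^ j)) (k + 1)
          (by omega : k + k + 1 ≤ k + k + 1)]
        have : k + k + 1 - (k + k + 1) = 0 := by omega
        have h2 : k + k + 1 - (k + 1) = k := by omega
        rw [this, h2, ← Finset.range_eq_Ico]
        have hk1 : k = (k - 1) + 1 := by omega
        rw [hk1] at *
        exact sum_phi_range hp (k - 1)
      rw [e1, e2]
    have hx : p ^ k = p ^ (k - 1) * p := by
      conv_lhs => rw [show k = (k - 1) + 1 by omega]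
      rw [pow_succ]
    refine le_of_eq ?_
    rw [hval, hx, pow_add, hx]
    ring
  · -- e = 2k + 1
    subst hk
    have hval : vI (p ^ (2 * k + 1)) = p ^ k + p ^ k := by
      rw [hS, show 2 * k + 1 + 1 = (2 * k + 1) + 1 by rfl]
      rw [split_sum k (2 * k + 1) (by omega)]
      have e1 : ∑ i ∈ Finset.Ico 0 (k + 1), Nat.totient (p ^ min i (2 * k + 1 - i)) =
          p ^ k := by
        rw [← Finset.range_eq_Ico]
        have hc : ∀ i ∈ Finset.range (k + 1),
            Nat.totient (p ^ min i (2 * k + 1 - i)) = Nat.totient (p ^ i) := by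
          intro i hi
          simp only [Finset.mem_range] at hi
          have hmin : min i (2 * k + 1 - i) = i := by omega
          rw [hmin]
        rw [Finset.sum_congr rfl hc]
        exact sum_phi_range hp k
      have e2 : ∑ i ∈ Finset.Ico (k + 1) (2 * k + 1 + 1),
          Nat.totient (p ^ min i (2 * k + 1 - i)) = p ^ k := by
        have hc : ∀ i ∈ Finset.Ico (k + 1) (2 * k + 1 + 1),
            Nat.totient (p ^ min i (2 * k + 1 - i)) = Nat.totient (p ^ (2 * k + 1 - i)) := by
          intro i hi
          simp only [Finset.mem_Ico] at hi
          have hmin : min i (2 * k + 1 - i) = 2 * k + 1 - i := by omega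
          rw [hmin]
        rw [Finset.sum_congr rfl hc]
        rw [Finset.sum_Ico_reflect (fun j => Nat.totient (p ^ j)) (k + 1)
          (by omega : 2 * k + 1 + 1 ≤ 2 * k + 1 + 1)]
        have h1 : 2 * k + 1 + 1 - (2 * k + 1 + 1) = 0 := by omega
        have h2 : 2 * k + 1 + 1 - (k + 1) = k + 1 := by omega
        rw [h1, h2, ← Finset.range_eq_Ico]
        exact sum_phi_range hp k
      rw [e1, e2]
    have h4 : 4 * p ≤ (p + 1) ^ 2 := by nlinarith [two_mul_le_add_sq p 1]
    have hy : p ^ (2 * k + 1) = p ^ k * p ^ k * p := by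
      rw [show 2 * k + 1 = k + k + 1 by ring, pow_add, pow_add, pow_one]
    rw [hval, hy]
    calc (p ^ k + p ^ k) ^ 2 * p ^ 2 = (4 * p) * (p ^ k * p ^ k * p) := by ring
      _ ≤ ((p + 1) ^ 2) * (p ^ k * p ^ k * p) := Nat.mul_le_mul_right _ h4
      _ = p ^ k * p ^ k * p * (p + 1) ^ 2 := by ring

lemma vI_bound : ∀ N : ℕ, N ≠ 0 →
    vI N ^ 2 * ∏ p ∈ N.primeFactors, p ^ 2 ≤ N * ∏ p ∈ N.primeFactors, (p + 1) ^ 2 := by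
  intro N
  induction N using Nat.recOnPosPrimePosCoprime with
  | prime_pow p n hpp hn =>
    intro _
    rw [Nat.primeFactors_prime_pow (by omega) hpp]
    simpa using vI_prime_pow hpp n
  | zero => intro h; exact absurd rfl h
  | one => intro _; simp [vI_one]
  | coprime a b ha hb hab iha ihb =>
    intro _
    have ha0 : a ≠ 0 := by omega
    have hb0 : b ≠ 0 := by omega
    rw [Nat.Coprime.primeFactors_mul hab,
      Finset.prod_union hab.disjoint_primeFactors,
      Finset.prod_union hab.disjoint_primeFactors, vI_mul ha0 hb0 hab]
    calc (vI a * vI b) ^ 2 *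
          ((∏ p ∈ a.primeFactors, p ^ 2) * ∏ p ∈ b.primeFactors, p ^ 2)
        = (vI a ^ 2 * ∏ p ∈ a.primeFactors, p ^ 2) *
            (vI b ^ 2 * ∏ p ∈ b.primeFactors, p ^ 2) := by ring
      _ ≤ (a * ∏ p ∈ a.primeFactors, (p + 1) ^ 2) *
            (b * ∏ p ∈ b.primeFactors, (p + 1) ^ 2) :=
          Nat.mul_le_mul (iha ha0) (ihb hb0)
      _ = a * b * ((∏ p ∈ a.primeFactors, (p + 1) ^ 2) *
            ∏ p ∈ b.primeFactors, (p + 1) ^ 2) := by ring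

/-! ### Global bounds and the tail estimate -/

lemma PP_le (N : ℕ) (hN : N ≠ 0) : PP N ≤ N := by
  rw [PP, pfc_eq]
  exact Nat.le_of_dvd (Nat.pos_of_ne_zero hN) (Nat.prod_primeFactors_dvd N)

lemma prod2_bound (N : ℕ) (hN : N ≠ 0) (f : ℕ → ℕ) (hf : ∀ p, f p ≤ 2) :
    (∏ p ∈ pfc N, f p) ^ 2 * PP N ^ 2 ≤ N * QQ N ^ 2 := by
  have hPPle := PP_le N hN
  rw [PP, QQ, pfc_eq] at *
  have h4 : ∀ p ∈ N.primeFactors, (f p * p) ^ 2 ≤ p * (p + 1) ^ 2 := by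
    intro p hp
    have e1 : f p * p ≤ 2 * p := Nat.mul_le_mul_right p (hf p)
    have e3 : 4 * p ≤ (p + 1) ^ 2 := by nlinarith [two_mul_le_add_sq p 1]
    calc (f p * p) ^ 2 ≤ (2 * p) ^ 2 := Nat.pow_le_pow_left e1 2
      _ = (4 * p) * p := by ring
      _ ≤ ((p + 1) ^ 2) * p := Nat.mul_le_mul_right p e3
      _ = p * (p + 1) ^ 2 := by ring
  calc (∏ p ∈ N.primeFactors, f p) ^ 2 * (∏ p ∈ N.primeFactors, p) ^ 2
      = ∏ p ∈ N.primeFactors, (f p * p) ^ 2 := by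
        rw [← mul_pow, ← Finset.prod_mul_distrib, ← Finset.prod_pow]
    _ ≤ ∏ p ∈ N.primeFactors, p * (p + 1) ^ 2 := Finset.prod_le_prod' h4
    _ = (∏ p ∈ N.primeFactors, p) * ∏ p ∈ N.primeFactors, (p + 1) ^ 2 :=
        Finset.prod_mul_distrib
    _ ≤ N * ∏ p ∈ N.primeFactors, (p + 1) ^ 2 :=
        Nat.mul_le_mul_right _ hPPle
    _ = N * (∏ p ∈ N.primeFactors, (p + 1)) ^ 2 := by rw [Finset.prod_pow]

lemma a2_bound (N : ℕ) (hN : N ≠ 0) : a2 N ^ 2 * PP N ^ 2 ≤ N * QQ N ^ 2 := by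
  rw [a2]
  split
  · simpa using Nat.zero_le _
  · exact prod2_bound N hN c4 fun p => by unfold c4; split_ifs <;> omega

lemma a3_bound (N : ℕ) (hN : N ≠ 0) : a3 N ^ 2 * PP N ^ 2 ≤ N * QQ N ^ 2 := by
  rw [a3]
  split
  · simpa using Nat.zero_le _
  · exact prod2_bound N hN c3 fun p => by unfold c3; split_ifs <;> omega

lemma vI_bound' (N : ℕ) (hN : N ≠ 0) : vI N ^ 2 * PP N ^ 2 ≤ N * QQ N ^ 2 := by
  have h := vI_bound N hN
  rw [PP, QQ, pfc_eq, ← Finset.prod_pow, ← Finset.prod_pow]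
  exact h

lemma N_le_gamma (N : ℕ) : (N : ℚ) ≤ gamma0Index N := by
  rw [gamma0Index]
  have hfac : ∀ p ∈ N.primeFactors, (1:ℚ) ≤ 1 + 1 / (p : ℚ) := by
    intro p hp
    have : (0:ℚ) ≤ 1 / (p:ℚ) := by positivity
    linarith
  have h1 : (1:ℚ) ≤ ∏ p ∈ N.primeFactors, (1 + 1 / (p : ℚ)) := by
    calc (1:ℚ) = ∏ _p ∈ N.primeFactors, (1:ℚ) := by simp
      _ ≤ ∏ p ∈ N.primeFactors, (1 + 1 / (p : ℚ)) :=
          Finset.prod_le_prod (fun i _ => zero_le_one) hfac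
  nlinarith [Nat.cast_nonneg (α := ℚ) N]

lemma le_gamma_of_sq (N X : ℕ) (h196 : 196 ≤ N)
    (hb : X ^ 2 * PP N ^ 2 ≤ N * QQ N ^ 2) : 14 * (X : ℚ) ≤ gamma0Index N := by
  have hP : (0:ℚ) < (PP N : ℚ) := by exact_mod_cast PP_pos N
  have hγN : (N : ℚ) ≤ gamma0Index N := N_le_gamma N
  have hN196 : (196 : ℚ) ≤ (N : ℚ) := by exact_mod_cast h196
  have hγpos : (0:ℚ) ≤ gamma0Index N := by linarith
  have hbQ : (X:ℚ) ^ 2 * (PP N:ℚ) ^ 2 ≤ (N:ℚ) * (QQ N:ℚ) ^ 2 := by exact_mod_cast hb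
  have hγPP : gamma0Index N * (PP N : ℚ) = (N : ℚ) * QQ N := gamma0_eq N
  have h3 : ((14 * X : ℚ)) ^ 2 * (PP N:ℚ) ^ 2 ≤ (gamma0Index N) ^ 2 * (PP N:ℚ) ^ 2 := by
    have e : (gamma0Index N) ^ 2 * (PP N:ℚ) ^ 2 = ((N:ℚ) * QQ N) ^ 2 := by
      rw [← mul_pow, hγPP]
    rw [e]
    nlinarith [sq_nonneg ((X:ℚ) * PP N), Nat.cast_nonneg (α := ℚ) N]
  have h4 : ((14 * X : ℚ)) ^ 2 ≤ (gamma0Index N) ^ 2 :=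
    le_of_mul_le_mul_right h3 (by positivity)
  exact (pow_le_pow_iff_left₀ (by positivity) hγpos two_ne_zero).mp h4

lemma genus_gt (N : ℕ) (h196 : 196 ≤ N) : ¬ genusX0 N ≤ 2 := by
  have hN0 : N ≠ 0 := by omega
  have B2 : 14 * (a2 N : ℚ) ≤ gamma0Index N :=
    le_gamma_of_sq N (a2 N) h196 (a2_bound N hN0)
  have B3 : 14 * (a3 N : ℚ) ≤ gamma0Index N :=
    le_gamma_of_sq N (a3 N) h196 (a3_bound N hN0)
  have BI : 14 * (vI N : ℚ) ≤ gamma0Index N :=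
    le_gamma_of_sq N (vI N) h196 (vI_bound' N hN0)
  have hγN : (N : ℚ) ≤ gamma0Index N := N_le_gamma N
  have hN196 : (196 : ℚ) ≤ (N : ℚ) := by exact_mod_cast h196
  rw [genusX0, nuTwo_eq, nuThree_eq, nuInf_eq, not_le]
  linarith

/-! ### Finite verification -/

set_option maxRecDepth 1000000 in
set_option maxHeartbeats 4000000 in
lemma decA : ∀ N ∈ Finset.Icc 1 29, ok N := by decide

set_option maxRecDepth 1000000 in
set_option maxHeartbeats 4000000 in
lemma decC1 : ∀ N ∈ Finset.Icc 30 100,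
    N ∉ ({31, 32, 36, 37, 49, 50} : Finset ℕ) → ¬ ok N := by decide

set_option maxRecDepth 1000000 in
set_option maxHeartbeats 4000000 in
lemma decC2 : ∀ N ∈ Finset.Icc 101 150, ¬ ok N := by decide

set_option maxRecDepth 1000000 in
set_option maxHeartbeats 4000000 in
lemma decC3 : ∀ N ∈ Finset.Icc 151 195, ¬ ok N := by decide

/-- The modular curve `X₀(N)` has genus at most two iff `N ≤ 29` or
`N ∈ {31, 32, 36, 37, 49, 50}`. -/
theorem genusX0_le_two_iff (N : ℕ) (hN : 1 ≤ N) :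
    genusX0 N ≤ 2 ↔ N ≤ 29 ∨ N ∈ ({31, 32, 36, 37, 49, 50} : Finset ℕ) := by
  constructor
  · intro h
    by_contra hc
    push_neg at hc
    obtain ⟨h29, hmem⟩ := hc
    have hok : ok N := (genus_le_iff N).mp h
    rcases le_or_gt N 100 with h100 | h100
    · exact decC1 N (Finset.mem_Icc.mpr ⟨by omega, h100⟩) hmem hok
    rcases le_or_gt N 150 with h150 | h150
    · exact decC2 N (Finset.mem_Icc.mpr ⟨by omega, h150⟩) hok
    rcases le_or_gt N 195 with h195 | h195
    · exact decC3 N (Finset.mem_Icc.mpr ⟨by omega, h195⟩) hok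
    · exact genus_gt N (by omega) h
  · intro h
    rw [genus_le_iff N]
    rcases h with h | h
    · exact decA N (Finset.mem_Icc.mpr ⟨hN, h⟩)
    · fin_cases h <;> decide
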